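/- Let α ∈ (0,∞)^d, and let ω be a random vector in [0,∞)^d with independent coordinates, the i-th coordinate having exponential density 2α_i·e^{−2α_i ω_i} on [0,∞). For x ∈ [0,∞)^d define φ_ω(x) := exp(−⟨x, ω⟩)·Π_{i=1}^d √((x_i + α_i)/α_i). Then for all x, x' ∈ [0,∞)^d, 𝔼[φ_ω(x)·φ_ω(x')] = Π_{i=1}^d 2√((x_i+α_i)(x_i'+α_i)) / ((x_i+α_i) + (x_i'+α_i)). In particular 𝔼[φ_ω(x)²] = 1 for every x. -/

import Mathlib

open MeasureTheory

/-- The exponential distribution on `ℝ` with rate `r`: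
the measure with density `w ↦ r e^{−rw}` on `[0,∞)` with respect to Lebesgue measure. -/
noncomputable def expLaw (r : ℝ) : Measure ℝ :=
  volume.withDensity fun w => ENNReal.ofReal (if 0 ≤ w then r * Real.exp (-(r * w)) else 0)

/-- The rescaled Laplace transform feature
`φ_ω(x) = exp(−⟨x,ω⟩) ∏ᵢ √((xᵢ+αᵢ)/αᵢ)`. -/
noncomputable def laplaceFeature {d : ℕ} (α : Fin d → ℝ) (ω x : Fin d → ℝ) : ℝ :=
  Real.exp (-(∑ i, x i * ω i)) * ∏ i, Real.sqrt ((x i + α i) / α i)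

instance expLaw_sigmaFinite (r : ℝ) : SigmaFinite (expLaw r) := by
  unfold expLaw; infer_instance

/-- Fubini for a product of functions of the coordinates, with general factor measures. -/
theorem my_integral_pi_prod {n : ℕ} (μ : Fin n → Measure ℝ) [∀ i, SigmaFinite (μ i)]
    (f : Fin n → ℝ → ℝ) :
    ∫ x : Fin n → ℝ, ∏ i, f i (x i) ∂Measure.pi μ = ∏ i, ∫ x, f i x ∂(μ i) := by
  induction n with
  | zero => simp [Measure.pi_of_empty, measureReal_def, Measure.pi_univ]
  | succ n ih =>
      calc
        _ = ∫ p : ℝ × (Fin n → ℝ), f 0 p.1 * ∏ i : Fin n, f i.succ (p.2 i)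
              ∂((μ 0).prod (Measure.pi fun j => μ j.succ)) := by
          rw [← ((measurePreserving_piFinSuccAbove μ 0).symm).integral_comp']
          congr 1
          ext p
          simp_rw [MeasurableEquiv.piFinSuccAbove_symm_apply, Fin.insertNthEquiv,
            Fin.prod_univ_succ, Fin.insertNth_zero]
          simp [Fin.zero_succAbove]
        _ = (∫ y, f 0 y ∂μ 0) * ∏ i : Fin n, ∫ y, f i.succ y ∂μ i.succ := by
          rw [integral_prod_mul (f := fun y => f 0 y)
            (g := fun (y : Fin n → ℝ) => ∏ i, f i.succ (y i)), ih]
        _ = _ := by rw [Fin.prod_univ_succ]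

/-- The Laplace transform of the exponential law. -/
theorem expLaw_integral {r s : ℝ} (hr : 0 < r) (hs : 0 ≤ s) :
    ∫ w, Real.exp (-(s * w)) ∂expLaw r = r / (r + s) := by
  have hrs : 0 < r + s := by linarith
  have hmeas : Measurable fun w : ℝ =>
      (if 0 ≤ w then r * Real.exp (-(r * w)) else 0).toNNReal := by
    apply Measurable.real_toNNReal
    exact Measurable.ite measurableSet_Ici
      ((measurable_const.mul (((measurable_const.mul measurable_id').neg).exp))) measurable_const
  have hrepr : expLaw r = volume.withDensity
      (fun w => ((if 0 ≤ w then r * Real.exp (-(r * w)) else 0).toNNReal : ENNReal)) := rfl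
  rw [hrepr, integral_withDensity_eq_integral_smul hmeas]
  have : (fun w : ℝ => (if 0 ≤ w then r * Real.exp (-(r * w)) else 0).toNNReal
        • Real.exp (-(s * w)))
      = Set.indicator (Set.Ici 0) (fun w => r * Real.exp (-((r + s) * w))) := by
    ext w
    by_cases h : 0 ≤ w
    · simp only [h, if_true, NNReal.smul_def, Set.indicator_of_mem (Set.mem_Ici.2 h)]
      rw [Real.coe_toNNReal _ (by positivity), smul_eq_mul, mul_assoc, ← Real.exp_add]
      ring_nf
    · simp [h, Set.indicator_of_notMem (by simpa using h : w ∉ Set.Ici (0:ℝ))]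
  rw [this, integral_indicator measurableSet_Ici, integral_Ici_eq_integral_Ioi,
    MeasureTheory.integral_const_mul]
  rw [integral_comp_mul_left_Ioi (fun x => Real.exp (-x)) 0 hrs, mul_zero,
    integral_exp_neg_Ioi, neg_zero, Real.exp_zero, smul_eq_mul, mul_one, div_eq_mul_inv, mul_comm]

/-- the Laplace transform kernel identity.
For `ω` with independent exponential coordinates of rates `2αᵢ`,
`𝔼[φ_ω(x) φ_ω(x')] = ∏ᵢ 2√((xᵢ+αᵢ)(xᵢ'+αᵢ))/((xᵢ+αᵢ)+(xᵢ'+αᵢ))`;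
in particular `𝔼[φ_ω(x)²] = 1`. -/
theorem statement15 {d : ℕ} (α : Fin d → ℝ) (hα : ∀ i, 0 < α i)
    (x x' : Fin d → ℝ) (hx : ∀ i, 0 ≤ x i) (hx' : ∀ i, 0 ≤ x' i) :
    (∫ ω : Fin d → ℝ, laplaceFeature α ω x * laplaceFeature α ω x'
        ∂(Measure.pi fun i => expLaw (2 * α i))) =
      (∏ i, 2 * Real.sqrt ((x i + α i) * (x' i + α i)) / ((x i + α i) + (x' i + α i))) ∧
    (∫ ω : Fin d → ℝ, laplaceFeature α ω x ^ 2
        ∂(Measure.pi fun i => expLaw (2 * α i))) = 1 := by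
  have key : ∀ (y : Fin d → ℝ), (∀ i, 0 ≤ y i) →
      (∫ ω : Fin d → ℝ, laplaceFeature α ω x * laplaceFeature α ω y
        ∂(Measure.pi fun i => expLaw (2 * α i))) =
      ∏ i, 2 * Real.sqrt ((x i + α i) * (y i + α i)) / ((x i + α i) + (y i + α i)) := by
    intro y hy
    have hrw : ∀ ω : Fin d → ℝ, laplaceFeature α ω x * laplaceFeature α ω y
        = ∏ i, (Real.exp (-((x i + y i) * ω i)) *
            (Real.sqrt ((x i + α i) / α i) * Real.sqrt ((y i + α i) / α i))) := by
      intro ω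
      simp only [laplaceFeature]
      rw [Finset.prod_mul_distrib, Finset.prod_mul_distrib, ← Real.exp_sum]
      have h1 : ∑ i, -((x i + y i) * ω i)
          = -(∑ i, x i * ω i) + -(∑ i, y i * ω i) := by
        rw [← neg_add, ← Finset.sum_add_distrib, ← Finset.sum_neg_distrib]
        exact Finset.sum_congr rfl fun i _ => by ring
      rw [h1, Real.exp_add]
      ring
    simp_rw [hrw]
    rw [my_integral_pi_prod (fun i => expLaw (2 * α i))
      (fun i w => Real.exp (-((x i + y i) * w)) *
        (Real.sqrt ((x i + α i) / α i) * Real.sqrt ((y i + α i) / α i)))]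
    refine Finset.prod_congr rfl fun i _ => ?_
    have hci := hα i
    have h2a : (0:ℝ) < 2 * α i := by linarith
    rw [integral_mul_const, expLaw_integral h2a (add_nonneg (hx i) (hy i))]
    rw [← Real.sqrt_mul (div_nonneg (by linarith [hx i]) hci.le)]
    rw [show (x i + α i) / α i * ((y i + α i) / α i)
        = (x i + α i) * (y i + α i) / (α i) ^ 2 by ring]
    rw [Real.sqrt_div (mul_nonneg (by linarith [hx i]) (by linarith [hy i])), Real.sqrt_sq hci.le]
    have h1 : 2 * α i + (x i + y i) ≠ 0 := ne_of_gt (by linarith [hx i, hy i])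
    have h2 : (x i + α i) + (y i + α i) ≠ 0 := ne_of_gt (by linarith [hx i, hy i])
    have h3 : α i ≠ 0 := ne_of_gt hci
    field_simp
    ring
  refine ⟨key x' hx', ?_⟩
  simp_rw [sq]
  rw [key x hx]
  refine Finset.prod_eq_one fun i _ => ?_
  have ha : (0:ℝ) < x i + α i := by linarith [hα i, hx i]
  rw [Real.sqrt_mul_self ha.le,
    show (x i + α i) + (x i + α i) = 2 * (x i + α i) by ring]
  exact div_self (by positivity : (2:ℝ) * (x i + α i) ≠ 0)
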